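/- Let V be the Volterra operator on L²([0,1], ℂ). Then ‖(I + V)ⁿ f‖ → ∞ as n → ∞ for every nonzero f ∈ L²([0,1], ℂ). -/

import Mathlib

open MeasureTheory Filter

open Set

/-- Lebesgue measure restricted to `[0,1]`. -/
noncomputable def μ01 : MeasureTheory.Measure ℝ :=
  MeasureTheory.volume.restrict (Set.Icc (0 : ℝ) 1)



theorem μ01_finite : IsFiniteMeasure μ01 := by unfold μ01; infer_instance
theorem μ01_noatoms : NullSingletonClass μ01 := by unfold μ01; infer_instance

theorem ball_pos {x : ℝ} (hx : x ∈ Icc (0:ℝ) 1) {ε : ℝ} (hε : 0 < ε) :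
    0 < μ01 (Metric.ball x ε) := by
  set l := max (x - ε/2) 0 with hl
  set u := min (x + ε/2) 1 with hu
  have hx0 := hx.1; have hx1 := hx.2
  have hlu : l < u := by
    rcases le_or_gt (x + ε/2) 1 with h | h
    · have : u = x + ε/2 := min_eq_left h
      rw [this]; exact max_lt (by linarith) (by linarith)
    · have : u = 1 := min_eq_right h.le
      rw [this]; exact max_lt (by linarith) (by linarith)
  have hsub : Ioo l u ⊆ Metric.ball x ε ∩ Icc 0 1 := by
    intro y hy
    have h1 : x - ε/2 ≤ l := le_max_left _ _
    have h2 : (0:ℝ) ≤ l := le_max_right _ _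
    have h3 : u ≤ x + ε/2 := min_le_left _ _
    have h4 : u ≤ 1 := min_le_right _ _
    constructor
    · rw [Metric.mem_ball, Real.dist_eq, abs_sub_lt_iff]
      constructor <;> nlinarith [hy.1, hy.2]
    · exact ⟨by nlinarith [hy.1], by nlinarith [hy.2]⟩
  have : 0 < μ01 (Ioo l u) := by
    unfold μ01
    rw [Measure.restrict_apply measurableSet_Ioo]
    have : Ioo l u ∩ Icc 0 1 = Ioo l u := by
      apply inter_eq_left.mpr
      intro y hy; exact (hsub hy).2
    rw [this, Real.volume_Ioo]
    simpa using hlu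
  calc 0 < μ01 (Ioo l u) := this
    _ ≤ μ01 (Metric.ball x ε) := measure_mono (fun y hy => (hsub hy).1)

theorem inj_lemma (f : ℝ → ℂ) (hf : Integrable f μ01)
    (h0 : ∀ᵐ x ∂μ01, ∫ t in Set.Icc (0:ℝ) x, f t ∂μ01 = 0) :
    f =ᵐ[μ01] 0 := by
  have : IsFiniteMeasure μ01 := μ01_finite
  have : NullSingletonClass μ01 := μ01_noatoms
  set F : ℝ → ℂ := fun x => ∫ t in Set.Icc (0:ℝ) x, f t ∂μ01 with hF
  -- F as interval integral
  have hFeq : ∀ x : ℝ, F x = ∫ t in (0:ℝ)..x, f t ∂μ01 := by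
    intro x
    rcases le_or_gt 0 x with h | h
    · show (∫ t in Set.Icc (0:ℝ) x, f t ∂μ01) = _
      rw [intervalIntegral.integral_of_le h, integral_Icc_eq_integral_Ioc]
    · have h1 : Icc (0:ℝ) x = ∅ := Icc_eq_empty (by linarith)
      have h2 : μ01 (Ioc x 0) = 0 := by
        unfold μ01
        rw [Measure.restrict_apply measurableSet_Ioc]
        have : Ioc x 0 ∩ Icc 0 1 ⊆ {0} := by
          intro t ⟨⟨_, ht2⟩, ⟨ht3, _⟩⟩
          simp [le_antisymm ht2 ht3]
        exact measure_mono_null this Real.volume_singleton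
      show (∫ t in Set.Icc (0:ℝ) x, f t ∂μ01) = _
      rw [intervalIntegral.integral_of_ge h.le, h1]
      simp [Measure.restrict_eq_zero.mpr h2]
  have hFcont : Continuous F := by
    have : Continuous fun x => ∫ t in (0:ℝ)..x, f t ∂μ01 :=
      intervalIntegral.continuous_primitive (fun a b => hf.intervalIntegrable) 0
    exact this.congr (fun x => (hFeq x).symm)
  -- F = 0 on [0,1]
  have hF01 : ∀ x ∈ Icc (0:ℝ) 1, F x = 0 := by
    intro x hx
    have hbad : μ01 {y | F y ≠ 0} = 0 := by
      rw [← compl_setOf]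
      exact ae_iff.mp h0
    have hseq : ∀ n : ℕ, ∃ y, F y = 0 ∧ dist y x < 1/(n+1) := by
      intro n
      have hpos : (0:ℝ) < 1/(n+1) := by positivity
      have h1 : 0 < μ01 (Metric.ball x (1/(n+1))) := ball_pos hx hpos
      have h2 : 0 < μ01 (Metric.ball x (1/(n+1)) ∩ {y | F y = 0}) := by
        rw [pos_iff_ne_zero]
        intro hz
        have h3 : Metric.ball x (1/(n+1)) ⊆
            (Metric.ball x (1/(n+1)) ∩ {y | F y = 0}) ∪ {y | F y ≠ 0} := by
          intro y hy
          by_cases hFy : F y = 0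
          · exact Or.inl ⟨hy, hFy⟩
          · exact Or.inr hFy
        have h4 := (measure_mono h3).trans (measure_union_le (μ := μ01) _ _)
        rw [hz, hbad] at h4
        simpa using h1.trans_le h4
      obtain ⟨y, hy⟩ := nonempty_of_measure_ne_zero h2.ne'
      exact ⟨y, hy.2, by simpa [Metric.mem_ball] using hy.1⟩
    choose y hy1 hy2 using hseq
    have hyx : Tendsto y atTop (nhds x) := by
      rw [tendsto_iff_dist_tendsto_zero]
      apply squeeze_zero (fun n => dist_nonneg) (fun n => (hy2 n).le)
      exact tendsto_one_div_add_atTop_nhds_zero_nat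
    have h1 : Tendsto (F ∘ y) atTop (nhds (F x)) :=
      (hFcont.continuousAt.tendsto).comp hyx
    have h2 : (F ∘ y) = fun _ => 0 := funext fun n => hy1 n
    rw [h2] at h1
    exact (tendsto_const_nhds_iff.mp h1).symm
  -- restriction identities
  have hrr : ∀ s : Set ℝ, MeasurableSet s → μ01.restrict s = volume.restrict (s ∩ Icc 0 1) := by
    intro s hs
    show (volume.restrict (Icc (0:ℝ) 1)).restrict s = _
    rw [Measure.restrict_restrict hs]
  have hFall : ∀ x : ℝ, F x = 0 := by
    intro x
    rcases lt_or_ge x 0 with h | h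
    · show (∫ t in Icc (0:ℝ) x, f t ∂μ01) = 0
      rw [Icc_eq_empty (by linarith : ¬ (0:ℝ) ≤ x)]
      simp
    rcases le_or_gt x 1 with h1 | h1
    · exact hF01 x ⟨h, h1⟩
    · have heq : μ01.restrict (Icc 0 x) = μ01.restrict (Icc 0 1) := by
        rw [hrr _ measurableSet_Icc, hrr _ measurableSet_Icc]
        congr 1
        rw [inter_eq_right.mpr (Icc_subset_Icc le_rfl h1.le), inter_self]
      show (∫ t in Icc (0:ℝ) x, f t ∂μ01) = 0
      calc (∫ t, f t ∂(μ01.restrict (Icc 0 x)))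
          = ∫ t, f t ∂(μ01.restrict (Icc 0 1)) := by rw [heq]
        _ = 0 := hF01 1 ⟨zero_le_one, le_rfl⟩
  have hres_univ : μ01.restrict (Icc 0 1) = μ01 := by
    rw [hrr _ measurableSet_Icc, inter_self]; rfl
  have huniv : (∫ t, f t ∂μ01) = 0 := by
    calc (∫ t, f t ∂μ01) = ∫ t, f t ∂(μ01.restrict (Icc 0 1)) := by rw [hres_univ]
      _ = 0 := hF01 1 ⟨zero_le_one, le_rfl⟩
  have hIoc : ∀ l u : ℝ, l < u → ∫ t in Ioc l u, f t ∂μ01 = 0 := by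
    intro l u hlu
    rcases lt_or_ge l 0 with h | h
    · have heq : μ01.restrict (Ioc l u) = μ01.restrict (Icc 0 u) := by
        rw [hrr _ measurableSet_Ioc, hrr _ measurableSet_Icc]
        congr 1
        ext t
        simp only [mem_inter_iff, mem_Ioc, mem_Icc]
        constructor
        · rintro ⟨⟨_, h2⟩, h3, h4⟩; exact ⟨⟨h3, h2⟩, h3, h4⟩
        · rintro ⟨⟨_, h2⟩, h3, h4⟩; exact ⟨⟨lt_of_lt_of_le h h3, h2⟩, h3, h4⟩
      calc (∫ t in Ioc l u, f t ∂μ01)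
          = ∫ t, f t ∂(μ01.restrict (Icc 0 u)) := by rw [heq]
        _ = 0 := hFall u
    · have hsplit : Icc (0:ℝ) l ∪ Ioc l u = Icc 0 u := Icc_union_Ioc_eq_Icc h hlu.le
      have hdisj : Disjoint (Icc (0:ℝ) l) (Ioc l u) := by
        apply Set.disjoint_left.mpr
        rintro t ⟨_, h2⟩ ⟨h3, _⟩
        exact absurd h2 (not_le.mpr h3)
      have hsum := setIntegral_union hdisj measurableSet_Ioc hf.integrableOn hf.integrableOn
      rw [hsplit] at hsum
      have h1 := hFall u
      have h2 := hFall l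
      show (∫ t in Ioc l u, f t ∂μ01) = 0
      rw [show F u = ∫ t in Icc (0:ℝ) u, f t ∂μ01 from rfl] at h1
      rw [show F l = ∫ t in Icc (0:ℝ) l, f t ∂μ01 from rfl] at h2
      rw [h2, zero_add] at hsum
      rw [← hsum, h1]
  -- Dynkin argument
  have hC : ∀ s : Set ℝ, MeasurableSet s → ∫ t in s, f t ∂μ01 = 0 := by
    have key := MeasurableSpace.induction_on_inter
      (m := Real.measurableSpace)
      (C := fun s _ => ∫ t in s, f t ∂μ01 = 0)
      (s := {S : Set ℝ | ∃ l u : ℝ, l < u ∧ Ioc l u = S})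
      (BorelSpace.measurable_eq.trans (borel_eq_generateFrom_Ioc ℝ))
      (by simpa using isPiSystem_Ioc (id : ℝ → ℝ) (id : ℝ → ℝ))
      (by simp)
      (by rintro S ⟨l, u, hlu, rfl⟩; exact hIoc l u hlu)
      (by
        intro t ht hCt
        have hsum := integral_add_compl ht hf
        rw [hCt, zero_add] at hsum
        rw [hsum, huniv])
      (by
        intro g hdisj hmeas hCg
        rw [integral_iUnion hmeas hdisj hf.integrableOn]
        simp [hCg])
    exact fun s hs => key s hs
  exact ae_eq_zero_of_forall_setIntegral_eq_of_sigmaFinite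
    (fun s _ _ => hf.integrableOn) (fun s hs _ => hC s hs)



theorem μ01_compl_Icc : μ01 (Icc (0:ℝ) 1)ᶜ = 0 := by
  unfold μ01
  rw [Measure.restrict_apply measurableSet_Icc.compl, compl_inter_self, measure_empty]

theorem integrable_of_L2 (g : Lp ℂ 2 μ01) : Integrable (g : ℝ → ℂ) μ01 := by
  have : IsFiniteMeasure μ01 := μ01_finite
  exact (Lp.memLp g).integrable (by norm_num)

theorem pos_lemma (g h : Lp ℂ 2 μ01)
    (hgh : ∀ᵐ x ∂μ01, (h : ℝ → ℂ) x = ∫ t in Set.Icc (0:ℝ) x, (g : ℝ → ℂ) t ∂μ01) :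
    0 ≤ RCLike.re (inner ℂ g h : ℂ) := by
  have : IsFiniteMeasure μ01 := μ01_finite
  have : NullSingletonClass μ01 := μ01_noatoms
  set G : ℝ → ℂ := (g : ℝ → ℂ) with hG
  have hgi : Integrable G μ01 := integrable_of_L2 g
  have hgci : Integrable (fun x => (starRingEnd ℂ) (G x)) μ01 := by
    refine ⟨RCLike.continuous_conj.comp_aestronglyMeasurable hgi.1, ?_⟩
    simpa [HasFiniteIntegral] using hgi.2
  set I0 : ℂ := ∫ t, G t ∂μ01 with hI0
  set Fn : ℝ × ℝ → ℂ := fun p => (starRingEnd ℂ) (G p.1) * G p.2 with hFn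
  have hFi : Integrable Fn (μ01.prod μ01) := Integrable.mul_prod hgci hgi
  set S : Set (ℝ × ℝ) := {p | 0 ≤ p.2} ∩ {p | p.2 ≤ p.1} with hSdef
  set S' : Set (ℝ × ℝ) := {p | 0 ≤ p.1} ∩ {p | p.1 ≤ p.2} with hS'def
  have hS : MeasurableSet S :=
    (measurableSet_le measurable_const measurable_snd).inter
      (measurableSet_le measurable_snd measurable_fst)
  have hS' : MeasurableSet S' :=
    (measurableSet_le measurable_const measurable_fst).inter
      (measurableSet_le measurable_fst measurable_snd)
  have hHi : Integrable (S.indicator Fn) (μ01.prod μ01) := hFi.indicator hS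
  have hH'i : Integrable (S'.indicator Fn) (μ01.prod μ01) := hFi.indicator hS'
  -- inner product as double integral
  have h3 : (inner ℂ g h : ℂ) = ∫ p, S.indicator Fn p ∂(μ01.prod μ01) := by
    rw [MeasureTheory.L2.inner_def]
    have step1 : (∫ x, (inner ℂ (G x) ((h : ℝ → ℂ) x) : ℂ) ∂μ01)
        = ∫ x, (starRingEnd ℂ) (G x) * (∫ t in Set.Icc (0:ℝ) x, G t ∂μ01) ∂μ01 := by
      apply integral_congr_ae
      filter_upwards [hgh] with x hx
      rw [RCLike.inner_apply', hx]
    rw [step1]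
    have step2 : ∀ x : ℝ, (starRingEnd ℂ) (G x) * (∫ t in Set.Icc (0:ℝ) x, G t ∂μ01)
        = ∫ t, S.indicator Fn (x, t) ∂μ01 := by
      intro x
      have hind : ∀ t : ℝ, S.indicator Fn (x, t)
          = (Icc (0:ℝ) x).indicator (fun t => (starRingEnd ℂ) (G x) * G t) t := by
        intro t
        by_cases ht : t ∈ Icc (0:ℝ) x
        · rw [Set.indicator_of_mem ht,
            Set.indicator_of_mem (show (x,t) ∈ S from ⟨ht.1, ht.2⟩)]
        · rw [Set.indicator_of_notMem ht,
            Set.indicator_of_notMem (fun hc => ht ⟨hc.1, hc.2⟩)]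
      calc (starRingEnd ℂ) (G x) * (∫ t in Set.Icc (0:ℝ) x, G t ∂μ01)
          = ∫ t, (Icc (0:ℝ) x).indicator (fun t => (starRingEnd ℂ) (G x) * G t) t ∂μ01 := by
            rw [integral_indicator measurableSet_Icc, integral_const_mul]
        _ = ∫ t, S.indicator Fn (x, t) ∂μ01 := by
            apply integral_congr_ae
            filter_upwards with t
            rw [hind t]
    calc (∫ x, (starRingEnd ℂ) (G x) * (∫ t in Set.Icc (0:ℝ) x, G t ∂μ01) ∂μ01)
        = ∫ x, ∫ t, S.indicator Fn (x, t) ∂μ01 ∂μ01 := by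
          apply integral_congr_ae
          filter_upwards with x
          rw [step2 x]
      _ = ∫ p, S.indicator Fn p ∂(μ01.prod μ01) := by
          rw [integral_integral (f := fun x t => S.indicator Fn (x, t)) (by exact hHi)]
  -- conjugate as double integral over S'
  have h4 : (starRingEnd ℂ) (inner ℂ g h : ℂ) = ∫ p, S'.indicator Fn p ∂(μ01.prod μ01) := by
    rw [h3, ← integral_conj, ← integral_prod_swap]
    apply integral_congr_ae
    filter_upwards with p
    show (starRingEnd ℂ) (S.indicator Fn p.swap) = S'.indicator Fn p
    by_cases hp : p ∈ S'
    · have hps : p.swap ∈ S := ⟨hp.1, hp.2⟩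
      rw [Set.indicator_of_mem hps, Set.indicator_of_mem hp]
      show (starRingEnd ℂ) ((starRingEnd ℂ) (G p.2) * G p.1) = _
      rw [map_mul, Complex.conj_conj]
      ring
    · have hps : p.swap ∉ S := fun hc => hp ⟨hc.1, hc.2⟩
      rw [Set.indicator_of_notMem hps, Set.indicator_of_notMem hp, map_zero]
  -- a.e. facts on the product
  have hae1 : ∀ᵐ p ∂(μ01.prod μ01), p.1 ∈ Icc (0:ℝ) 1 := by
    rw [ae_iff]
    have hset : {p : ℝ × ℝ | ¬ p.1 ∈ Icc (0:ℝ) 1} = (Icc (0:ℝ) 1)ᶜ ×ˢ (univ : Set ℝ) := by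
      ext p; simp
    rw [hset, Measure.prod_prod, μ01_compl_Icc, zero_mul]
  have hae2 : ∀ᵐ p ∂(μ01.prod μ01), p.2 ∈ Icc (0:ℝ) 1 := by
    rw [ae_iff]
    have hset : {p : ℝ × ℝ | ¬ p.2 ∈ Icc (0:ℝ) 1} = (univ : Set ℝ) ×ˢ (Icc (0:ℝ) 1)ᶜ := by
      ext p; simp
    rw [hset, Measure.prod_prod, μ01_compl_Icc, mul_zero]
  have hae3 : ∀ᵐ p ∂(μ01.prod μ01), p.1 ≠ p.2 := by
    have hD : MeasurableSet {p : ℝ × ℝ | p.1 = p.2} :=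
      measurableSet_eq_fun measurable_fst measurable_snd
    rw [ae_iff]
    have hset : {p : ℝ × ℝ | ¬ p.1 ≠ p.2} = {p : ℝ × ℝ | p.1 = p.2} := by
      ext p; simp
    rw [hset, Measure.prod_apply hD]
    have : ∀ x : ℝ, μ01 (Prod.mk x ⁻¹' {p : ℝ × ℝ | p.1 = p.2}) = 0 := by
      intro x
      have : Prod.mk x ⁻¹' {p : ℝ × ℝ | p.1 = p.2} = {x} := by
        ext y; simp [eq_comm]
      rw [this, measure_singleton]
    simp [this]
  -- sum identity
  have h5 : (inner ℂ g h : ℂ) + (starRingEnd ℂ) (inner ℂ g h : ℂ) = (starRingEnd ℂ) I0 * I0 := by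
    rw [h4, h3, ← integral_add hHi hH'i]
    have hcongr : ∫ p, (S.indicator Fn p + S'.indicator Fn p) ∂(μ01.prod μ01)
        = ∫ p, Fn p ∂(μ01.prod μ01) := by
      apply integral_congr_ae
      filter_upwards [hae1, hae2, hae3] with p hp1 hp2 hp3
      rcases lt_or_gt_of_ne hp3 with hlt | hgt
      · rw [Set.indicator_of_notMem (fun hc : p ∈ S => absurd hc.2 (not_le.mpr hlt)),
          Set.indicator_of_mem (show p ∈ S' from ⟨hp1.1, hlt.le⟩), zero_add]
      · rw [Set.indicator_of_mem (show p ∈ S from ⟨hp2.1, hgt.le⟩),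
          Set.indicator_of_notMem (fun hc : p ∈ S' => absurd hc.2 (not_le.mpr hgt)), add_zero]
    rw [hcongr]
    have hmul := MeasureTheory.integral_prod_mul (μ := μ01) (ν := μ01)
      (fun x => (starRingEnd ℂ) (G x)) G
    rw [integral_conj] at hmul
    exact hmul
  -- conclude
  have h6 := congrArg Complex.re h5
  rw [Complex.add_conj, ← Complex.normSq_eq_conj_mul_self] at h6
  simp only [Complex.ofReal_re] at h6
  rw [RCLike.re_to_complex]
  nlinarith [Complex.normSq_nonneg I0, h6]

/-- If `V` is the Volterra operator on `L²([0,1], ℂ)`, then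
`‖(I + V)ⁿ f‖ → ∞` for every nonzero `f ∈ L²`. -/
theorem stmt_18
    (V : MeasureTheory.Lp ℂ 2 μ01 →L[ℂ] MeasureTheory.Lp ℂ 2 μ01)
    (hV : ∀ f : MeasureTheory.Lp ℂ 2 μ01,
      ∀ᵐ x ∂μ01, (V f : ℝ → ℂ) x = ∫ t in Set.Icc (0 : ℝ) x, f t ∂μ01) :
    ∀ f : MeasureTheory.Lp ℂ 2 μ01, f ≠ 0 →
      Filter.Tendsto (fun n : ℕ => ‖((1 + V) ^ n) f‖) Filter.atTop Filter.atTop := by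
  have key2 : ∀ u : Lp ℂ 2 μ01, ‖u‖ ^ 2 + ‖V u‖ ^ 2 ≤ ‖u + V u‖ ^ 2 := by
    intro u
    have hpos := pos_lemma u (V u) (hV u)
    have hexp := norm_add_sq (𝕜 := ℂ) u (V u)
    linarith
  have mono : ∀ u : Lp ℂ 2 μ01, ‖u‖ ≤ ‖u + V u‖ := by
    intro u
    have h1 := key2 u
    refine le_of_pow_le_pow_left₀ two_ne_zero (norm_nonneg _) ?_
    nlinarith [sq_nonneg ‖V u‖]
  have happly : ∀ (n : ℕ) (u : Lp ℂ 2 μ01),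
      ((1 + V) ^ (n + 1)) u = ((1 + V) ^ n) u + V (((1 + V) ^ n) u) := by
    intro n u
    rw [pow_succ' (1 + V) n, ContinuousLinearMap.mul_apply, ContinuousLinearMap.add_apply,
      ContinuousLinearMap.one_apply]
  have hcomm : ∀ (n : ℕ) (u : Lp ℂ 2 μ01),
      V (((1 + V) ^ n) u) = ((1 + V) ^ n) (V u) := by
    intro n u
    have hc : Commute V (1 + V) := (Commute.one_right V).add_right (Commute.refl V)
    have hcn := hc.pow_right n
    calc V (((1 + V) ^ n) u) = (V * (1 + V) ^ n) u := rfl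
      _ = ((1 + V) ^ n * V) u := by rw [hcn]
      _ = ((1 + V) ^ n) (V u) := rfl
  have monopow : ∀ (n : ℕ) (u : Lp ℂ 2 μ01), ‖u‖ ≤ ‖((1 + V) ^ n) u‖ := by
    intro n
    induction n with
    | zero => intro u; simp
    | succ n ih =>
      intro u
      rw [happly n u]
      exact (ih u).trans (mono _)
  intro f hf
  have hVf : V f ≠ 0 := by
    intro hVf0
    have h1 : (V f : ℝ → ℂ) =ᵐ[μ01] 0 := by
      rw [hVf0]; exact Lp.coeFn_zero ℂ 2 μ01
    have h2 : ∀ᵐ x ∂μ01, ∫ t in Set.Icc (0:ℝ) x, (f : ℝ → ℂ) t ∂μ01 = 0 := by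
      filter_upwards [hV f, h1] with x hx h0x
      rw [← hx, h0x]
      rfl
    have h3 := inj_lemma (f : ℝ → ℂ) (integrable_of_L2 f) h2
    exact hf (Lp.ext (h3.trans (Lp.coeFn_zero ℂ 2 μ01).symm))
  set c := ‖V f‖ with hc_def
  have hc : 0 < c := norm_pos_iff.mpr hVf
  have growth : ∀ n : ℕ, ‖f‖ ^ 2 + n * c ^ 2 ≤ ‖((1 + V) ^ n) f‖ ^ 2 := by
    intro n
    induction n with
    | zero => simp
    | succ n ih =>
      have h1 := key2 (((1 + V) ^ n) f)
      have h2 : c ≤ ‖V (((1 + V) ^ n) f)‖ := by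
        rw [hcomm n f]
        exact monopow n (V f)
      have h3 : c ^ 2 ≤ ‖V (((1 + V) ^ n) f)‖ ^ 2 := by nlinarith [hc.le]
      rw [happly n f]
      rw [Nat.cast_succ]
      nlinarith [h1, h3, ih]
  rw [tendsto_atTop]
  intro b
  have hsq : Tendsto (fun n : ℕ => ‖f‖ ^ 2 + n * c ^ 2) atTop atTop :=
    tendsto_atTop_add_const_left _ _
      (tendsto_natCast_atTop_atTop.atTop_mul_const (by positivity))
  filter_upwards [hsq.eventually_ge_atTop ((max b 0) ^ 2)] with n hn
  have h1 : (max b 0) ^ 2 ≤ ‖((1 + V) ^ n) f‖ ^ 2 := hn.trans (growth n)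
  have h2 : max b 0 ≤ ‖((1 + V) ^ n) f‖ :=
    le_of_pow_le_pow_left₀ two_ne_zero (norm_nonneg _) h1
  exact (le_max_left b 0).trans h2
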